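/- Every λ-term typable in the intersection type system D is strongly normalizing for β-reduction. -/

import Mathlib

/-- Untyped λ-terms in de Bruijn representation. -/
inductive Term : Type
  | var : ℕ → Term
  | lam : Term → Term
  | app : Term → Term → Term
  deriving DecidableEq

namespace Term

/-- Shift (lift) all de Bruijn indices ≥ d by one. -/
def lift (d : ℕ) : Term → Term
  | var n => var (if n < d then n else n + 1)
  | lam t => lam (lift (d + 1) t)
  | app t u => app (lift d t) (lift d u)

/-- Capture-avoiding substitution `t[k := u]` (de Bruijn style). -/
def subst : Term → ℕ → Term → Term
  | var n, k, u => if n = k then u else var (if n < k then n else n - 1)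
  | lam t, k, u => lam (subst t (k + 1) (lift 0 u))
  | app t v, k, u => app (subst t k u) (subst v k u)

/-- Swap the de Bruijn indices d and d+1 (exchange of two adjacent binders). -/
def swap (d : ℕ) : Term → Term
  | var n => var (if n = d then d + 1 else if n = d + 1 then d else n)
  | lam t => lam (swap (d + 1) t)
  | app t u => app (swap d t) (swap d u)

end Term

/-- The four reduction rules. -/
inductive Rule | beta | delta | gamma | assoc

/-- One-step reduction by a given rule (closed under congruence).
β: (λx.M N) ▷ M[x:=N];
δ: (λy.λx.M N) ▷ λx.(λy.M N), x ∉ FV(N);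
γ: (λx.M N P) ▷ (λx.(M P) N), x ∉ FV(P);
assoc: (M (λx.N P)) ▷ (λx.(M N) P), x ∉ FV(M).
Freshness conditions are realized by lifting. -/
inductive Step : Rule → Term → Term → Prop
  | beta (M N) : Step .beta (.app (.lam M) N) (Term.subst M 0 N)
  | delta (M N) : Step .delta (.app (.lam (.lam M)) N)
      (.lam (.app (.lam (Term.swap 0 M)) (Term.lift 0 N)))
  | gamma (M N P) : Step .gamma (.app (.app (.lam M) N) P)
      (.app (.lam (.app M (Term.lift 0 P))) N)
  | assoc (M N P) : Step .assoc (.app M (.app (.lam N) P))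
      (.app (.lam (.app (Term.lift 0 M) N)) P)
  | appCongL {r t t'} (u) : Step r t t' → Step r (.app t u) (.app t' u)
  | appCongR {r u u'} (t) : Step r u u' → Step r (.app t u) (.app t u')
  | lamCong {r t t'} : Step r t t' → Step r (.lam t) (.lam t')

/-- One-step reduction by the union of the four rules. -/
def StepAll (t t' : Term) : Prop := ∃ r, Step r t t'

/-- Strong normalization for the union of β, δ, γ, assoc. -/
def SN (t : Term) : Prop := Acc (fun a b => StepAll b a) t

/-- Strong normalization for β alone. -/
def SNbeta (t : Term) : Prop := Acc (fun a b => Step .beta b a) t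

mutual
/-- Simple types: atoms and arrows with simple codomain. -/
inductive STy : Type
  | atom : ℕ → STy
  | arrow : Ty → STy → STy
/-- Types of system D: intersections of simple types. -/
inductive Ty : Type
  | simple : STy → Ty
  | inter : STy → Ty → Ty
end

/-- Typing judgment of system D (contexts are lists of types, de Bruijn). -/
inductive Typing : List Ty → Term → Ty → Prop
  | var {Γ n A} : Γ[n]? = some A → Typing Γ (.var n) A
  | app {Γ M N A B} : Typing Γ M (.simple (.arrow A B)) → Typing Γ N A →
      Typing Γ (.app M N) (.simple B)
  | lam {Γ M A B} : Typing (A :: Γ) M (.simple B) →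
      Typing Γ (.lam M) (.simple (.arrow A B))
  | interI {Γ M A B} : Typing Γ M (.simple A) → Typing Γ M B →
      Typing Γ M (.inter A B)
  | interE1 {Γ M A B} : Typing Γ M (.inter A B) → Typing Γ M (.simple A)
  | interE2 {Γ M A B} : Typing Γ M (.inter A B) → Typing Γ M B

/-- A term is typable in system D. -/
def Typable (t : Term) : Prop := ∃ Γ A, Typing Γ t A

/-- (H M₁ ... Mₙ). -/
def appList (H : Term) (Ms : List Term) : Term := Ms.foldl .app H

namespace Term

theorem lift_lift (t : Term) : ∀ d e, e ≤ d → lift e (lift d t) = lift (d+1) (lift e t) := by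
  induction t with
  | var n =>
    intro d e h; simp only [lift]
    split_ifs <;> (try simp only [lift]) <;> (try split_ifs) <;>
      first | rfl | (congr 1; omega) | (exfalso; omega)
  | lam t ih => intro d e h; simp only [lift, ih (d+1) (e+1) (by omega)]
  | app t u iht ihu => intro d e h; simp only [lift, iht d e h, ihu d e h]

theorem subst_lift (t : Term) : ∀ k u, subst (lift k t) k u = t := by
  induction t with
  | var n =>
    intro k u; simp only [lift, subst]
    split_ifs <;> (try simp only [subst]) <;> (try split_ifs) <;>
      first | rfl | (congr 1; omega) | (exfalso; omega)
  | lam t ih => intro k u; simp only [lift, subst, ih]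
  | app t v iht ihv => intro k u; simp only [lift, subst, iht, ihv]

theorem lift_subst_high (M : Term) : ∀ d k N, k ≤ d →
    lift d (subst M k N) = subst (lift (d+1) M) k (lift d N) := by
  induction M with
  | var n =>
    intro d k N h; simp only [lift, subst]
    split_ifs <;> (try simp only [lift, subst]) <;> (try split_ifs) <;>
      first | rfl | (congr 1; omega) | (exfalso; omega)
  | lam t ih =>
    intro d k N h
    simp only [lift, subst, ih (d+1) (k+1) (lift 0 N) (by omega)]
    rw [lift_lift N d 0 (by omega)]
  | app t v iht ihv => intro d k N h; simp only [lift, subst, iht _ _ _ h, ihv _ _ _ h]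

theorem lift_subst_low (M : Term) : ∀ d k N, d ≤ k →
    lift d (subst M k N) = subst (lift d M) (k+1) (lift d N) := by
  induction M with
  | var n =>
    intro d k N h; simp only [lift, subst]
    split_ifs <;> (try simp only [lift, subst]) <;> (try split_ifs) <;>
      first | rfl | (congr 1; omega) | (exfalso; omega)
  | lam t ih =>
    intro d k N h
    simp only [lift, subst, ih (d+1) (k+1) (lift 0 N) (by omega)]
    rw [lift_lift N d 0 (by omega)]
  | app t v iht ihv => intro d k N h; simp only [lift, subst, iht _ _ _ h, ihv _ _ _ h]

theorem subst_subst (M : Term) : ∀ N u j k, j ≤ k →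
    subst (subst M j N) k u = subst (subst M (k+1) (lift j u)) j (subst N k u) := by
  induction M with
  | var n =>
    intro N u j k h; simp only [subst]
    split_ifs <;> (try simp only [subst]) <;> (try split_ifs) <;>
      first | rfl | (exfalso; omega) | (congr 1; omega) | (rw [subst_lift])
  | lam t ih =>
    intro N u j k h
    simp only [subst]
    rw [ih (lift 0 N) (lift 0 u) (j+1) (k+1) (by omega)]
    rw [← lift_lift u j 0 (by omega), ← lift_subst_low N 0 k u (by omega)]
  | app t v iht ihv => intro N u j k h; simp only [subst, iht _ _ _ _ h, ihv _ _ _ _ h]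



def up (σ : ℕ → Term) : ℕ → Term
  | 0 => var 0
  | n + 1 => lift 0 (σ n)

def msubst (σ : ℕ → Term) : Term → Term
  | var n => σ n
  | lam t => lam (msubst (up σ) t)
  | app t u => app (msubst σ t) (msubst σ u)

theorem msubst_ext {σ τ : ℕ → Term} (h : ∀ n, σ n = τ n) : ∀ t, msubst σ t = msubst τ t := by
  intro t
  induction t generalizing σ τ with
  | var n => exact h n
  | lam t ih =>
    simp only [msubst]
    rw [ih (σ := up σ) (τ := up τ)]
    intro n; cases n with
    | zero => rfl
    | succ n => simp only [up, h n]
  | app t u iht ihu => simp only [msubst, iht h, ihu h]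

theorem msubst_lift (t : Term) : ∀ σ d,
    msubst σ (lift d t) = msubst (fun n => σ (if n < d then n else n + 1)) t := by
  induction t with
  | var n => intro σ d; simp only [lift, msubst]
  | lam t ih =>
    intro σ d
    simp only [lift, msubst, ih]
    apply congrArg
    apply msubst_ext
    intro n; cases n with
    | zero => simp [up]
    | succ n =>
      simp only [up]
      by_cases h : n < d
      · rw [if_pos (by omega : n + 1 < d + 1), if_pos h]
      · rw [if_neg (by omega : ¬ n + 1 < d + 1), if_neg h]
  | app t u iht ihu => intro σ d; simp only [lift, msubst, iht, ihu]

theorem lift_msubst (t : Term) : ∀ σ d,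
    lift d (msubst σ t) = msubst (fun n => lift d (σ n)) t := by
  induction t with
  | var n => intro σ d; simp only [msubst]
  | lam t ih =>
    intro σ d
    simp only [lift, msubst, ih]
    apply congrArg
    apply msubst_ext
    intro n; cases n with
    | zero => simp [up, lift]
    | succ n => simp only [up, lift_lift (σ n) d 0 (by omega)]
  | app t u iht ihu => intro σ d; simp only [lift, msubst, iht, ihu]

theorem msubst_msubst (t : Term) : ∀ σ τ,
    msubst τ (msubst σ t) = msubst (fun n => msubst τ (σ n)) t := by
  induction t with
  | var n => intro σ τ; simp only [msubst]
  | lam t ih =>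
    intro σ τ
    simp only [msubst, ih]
    apply congrArg
    apply msubst_ext
    intro n; cases n with
    | zero => rfl
    | succ n =>
      simp only [up, msubst_lift, lift_msubst]
      apply msubst_ext
      intro m; simp [up, if_neg (by omega : ¬ m < 0)]
  | app t u iht ihu => intro σ τ; simp only [msubst, iht, ihu]

theorem msubst_var (t : Term) : msubst (fun n => var n) t = t := by
  induction t with
  | var n => rfl
  | lam t ih =>
    simp only [msubst]
    rw [msubst_ext (τ := fun n => var n), ih]
    intro n; cases n with
    | zero => rfl
    | succ n => simp [up, lift]
  | app t u iht ihu => simp only [msubst, iht, ihu]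

theorem subst_eq_msubst (t : Term) : ∀ k u,
    subst t k u = msubst (fun n => if n = k then u else var (if n < k then n else n - 1)) t := by
  induction t with
  | var n => intro k u; simp only [subst, msubst]
  | lam t ih =>
    intro k u
    simp only [subst, msubst, ih]
    apply congrArg
    apply msubst_ext
    intro n; cases n with
    | zero => simp [up, if_neg (by omega : ¬ (0:ℕ) = k + 1), if_pos (by omega : 0 < k + 1)]
    | succ n =>
      simp only [up]
      by_cases h : n = k
      · subst h; simp
      · rw [if_neg h, if_neg (by omega : ¬ n + 1 = k + 1)]
        by_cases h2 : n < k
        · rw [if_pos h2, if_pos (by omega : n + 1 < k + 1)]; simp [lift]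
        · rw [if_neg h2, if_neg (by omega : ¬ n + 1 < k + 1)]
          simp only [lift, if_neg (by omega : ¬ n - 1 < 0)]
          congr 1; omega
  | app t u iht ihu => intro k u; simp only [subst, msubst, iht, ihu]

/-- The key identity for the lambda case of soundness. -/
theorem subst_msubst_up (M : Term) (σ : ℕ → Term) (u : Term) :
    subst (msubst (up σ) M) 0 u = msubst (fun n => match n with | 0 => u | n+1 => σ n) M := by
  rw [subst_eq_msubst, msubst_msubst]
  apply msubst_ext
  intro n; cases n with
  | zero => rfl
  | succ n =>
    simp only [up, msubst_lift]
    have : (fun m => (if (if m < 0 then m else m + 1) = 0 then u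
        else var (if (if m < 0 then m else m + 1) < 0 then (if m < 0 then m else m + 1)
          else (if m < 0 then m else m + 1) - 1))) = fun m => var m := by
      funext m; simp [if_neg (by omega : ¬ m < 0), if_neg (by omega : ¬ m + 1 = 0)]
    rw [msubst_ext (τ := fun m => var m), msubst_var]
    intro m; simp [if_neg (by omega : ¬ m < 0), if_neg (by omega : ¬ m + 1 = 0)]

end Term

namespace Term

theorem step_lift {t t' : Term} (h : Step .beta t t') : ∀ d, Step .beta (lift d t) (lift d t') := by
  generalize hr : Rule.beta = r at h
  induction h with
  | delta => exact Rule.noConfusion hr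
  | gamma => exact Rule.noConfusion hr
  | assoc => exact Rule.noConfusion hr
  | beta M N =>
    intro d
    rw [lift_subst_high M d 0 N (by omega)]
    exact Step.beta (lift (d+1) M) (lift d N)
  | appCongL u _ ih => intro d; exact Step.appCongL _ (ih hr d)
  | appCongR t _ ih => intro d; exact Step.appCongR _ (ih hr d)
  | lamCong _ ih => intro d; exact Step.lamCong (ih hr (d + 1))

theorem step_subst_left {M M' : Term} (h : Step .beta M M') :
    ∀ k u, Step .beta (subst M k u) (subst M' k u) := by
  generalize hr : Rule.beta = r at h
  induction h with
  | delta => exact Rule.noConfusion hr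
  | gamma => exact Rule.noConfusion hr
  | assoc => exact Rule.noConfusion hr
  | beta P N =>
    intro k u
    rw [subst_subst P N u 0 k (by omega)]
    exact Step.beta _ _
  | appCongL u _ ih => intro k v; exact Step.appCongL _ (ih hr k v)
  | appCongR t _ ih => intro k v; exact Step.appCongR _ (ih hr k v)
  | lamCong _ ih => intro k v; exact Step.lamCong (ih hr (k+1) (lift 0 v))

theorem steps_subst_right : ∀ (M u u' : Term) (k : ℕ), Step .beta u u' →
    Relation.ReflTransGen (Step .beta) (subst M k u) (subst M k u') := by
  intro M
  induction M with
  | var n =>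
    intro u u' k h
    simp only [subst]
    by_cases hn : n = k
    · rw [if_pos hn, if_pos hn]; exact Relation.ReflTransGen.single h
    · rw [if_neg hn, if_neg hn]
  | lam t ih =>
    intro u u' k h
    simp only [subst]
    exact Relation.ReflTransGen.lift Term.lam (fun _ _ => Step.lamCong)
      _ _ (ih (lift 0 u) (lift 0 u') (k+1) (step_lift h 0))
  | app t v iht ihv =>
    intro u u' k h
    simp only [subst]
    refine Relation.ReflTransGen.trans
      (Relation.ReflTransGen.lift (fun x => Term.app x (subst v k u))
        (fun _ _ hs => Step.appCongL _ hs) _ _ (iht u u' k h))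
      (Relation.ReflTransGen.lift (fun x => Term.app (subst t k u') x)
        (fun _ _ hs => Step.appCongR _ hs) _ _ (ihv u u' k h))

end Term

/-- β-SN is closed under β-steps. -/
theorem SNbeta.step {t t' : Term} (h : SNbeta t) (hs : Step .beta t t') : SNbeta t' := h.inv hs

theorem snbeta_of_image {f : Term → Term}
    (hf : ∀ a b, Step .beta a b → Step .beta (f a) (f b)) :
    ∀ {t : Term}, SNbeta (f t) → SNbeta t := by
  intro t h
  generalize hft : f t = s at h
  induction h generalizing t with
  | intro x _ ih =>
    subst hft
    exact Acc.intro _ (fun y hy => ih (f y) (hf _ _ hy) rfl)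

theorem SNbeta.lam {t : Term} (h : SNbeta t) : SNbeta (Term.lam t) := by
  induction h with
  | intro x _ ih =>
    refine Acc.intro _ (fun y hy => ?_)
    cases hy with
    | lamCong h' => exact ih _ h'

theorem SNbeta.of_app_left {t u : Term} (h : SNbeta (Term.app t u)) : SNbeta t := by
  generalize hs : Term.app t u = s at h
  induction h generalizing t u with
  | intro x _ ih =>
    subst hs
    exact Acc.intro _ (fun y hy => ih _ (Step.appCongL u hy) rfl)

theorem snbeta_rtg {t t' : Term} (h : Relation.ReflTransGen (Step .beta) t t')
    (hsn : SNbeta t) : SNbeta t' := by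
  induction h with
  | refl => exact hsn
  | tail _ hstep ih => exact ih.step hstep

mutual
/-- Reducibility for simple types. -/
def RedS : STy → Term → Prop
  | .atom _, t => SNbeta t
  | .arrow A B, t => SNbeta t ∧ ∀ u, Red A u → RedS B (.app t u)
/-- Reducibility for intersection types. -/
def Red : Ty → Term → Prop
  | .simple S, t => RedS S t
  | .inter S B, t => RedS S t ∧ Red B t
end

/-- Neutral terms: not a lambda. -/
def Neutral (t : Term) : Prop := ∀ M, t ≠ Term.lam M

mutual
theorem cr1S : ∀ (S : STy) (t : Term), RedS S t → SNbeta t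
  | .atom _, _, h => h
  | .arrow _ _, _, h => h.1
theorem cr1 : ∀ (A : Ty) (t : Term), Red A t → SNbeta t
  | .simple S, t, h => cr1S S t h
  | .inter S _, t, h => cr1S S t h.1
end

mutual
theorem cr2S : ∀ (S : STy) {t t' : Term}, RedS S t → Step .beta t t' → RedS S t'
  | .atom _, _, _, h, hs => h.step hs
  | .arrow A B, _, _, h, hs =>
    ⟨h.1.step hs, fun u hu => cr2S B (h.2 u hu) (Step.appCongL u hs)⟩
theorem cr2 : ∀ (A : Ty) {t t' : Term}, Red A t → Step .beta t t' → Red A t'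
  | .simple S, _, _, h, hs => cr2S S h hs
  | .inter S B, _, _, h, hs => ⟨cr2S S h.1 hs, cr2 B h.2 hs⟩
end

theorem red_rtg {A : Ty} {t t' : Term} (h : Relation.ReflTransGen (Step .beta) t t')
    (hr : Red A t) : Red A t' := by
  induction h with
  | refl => exact hr
  | tail _ hstep ih => exact cr2 A ih hstep

mutual
theorem cr3S : ∀ (S : STy) (t : Term), Neutral t →
    (∀ t', Step .beta t t' → RedS S t') → RedS S t
  | .atom _, t, _, h => Acc.intro _ (fun y hy => h y hy)
  | .arrow A B, t, hn, h => by
    constructor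
    · exact Acc.intro _ (fun y hy => cr1S _ y (h y hy))
    · intro u hu
      have hsnu : SNbeta u := cr1 A u hu
      induction hsnu with
      | intro u _ ih =>
        apply cr3S B (Term.app t u) (fun M hM => by cases hM)
        intro t' hstep
        cases hstep with
        | beta M N => exact absurd rfl (hn M)
        | appCongL _ h' => exact (h _ h').2 u hu
        | appCongR _ h' => exact ih _ h' (cr2 A hu h')
theorem cr3 : ∀ (A : Ty) (t : Term), Neutral t →
    (∀ t', Step .beta t t' → Red A t') → Red A t
  | .simple S, t, hn, h => cr3S S t hn h
  | .inter S B, t, hn, h =>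
    ⟨cr3S S t hn (fun t' h' => (h t' h').1), cr3 B t hn (fun t' h' => (h t' h').2)⟩
end

theorem red_var (A : Ty) (n : ℕ) : Red A (Term.var n) :=
  cr3 A _ (fun _ h => by cases h) (fun t' h => by cases h)

theorem redS_rtg {S : STy} {t t' : Term} (h : Relation.ReflTransGen (Step .beta) t t')
    (hr : RedS S t) : RedS S t' := by
  induction h with
  | refl => exact hr
  | tail _ hstep ih => exact cr2S S ih hstep

/-- Head β-expansion for reducibility. -/
theorem head_exp (S : STy) : ∀ (M : Term), SNbeta M → ∀ (u : Term), SNbeta u →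
    RedS S (Term.subst M 0 u) → RedS S (.app (.lam M) u) := by
  intro M hM
  induction hM with
  | intro M hMacc ihM =>
    intro u hu
    induction hu with
    | intro u huacc ihu =>
      intro hred
      apply cr3S S _ (fun P hP => by cases hP)
      intro t' hstep
      cases hstep with
      | beta => exact hred
      | appCongL _ h' =>
        cases h' with
        | lamCong hM' =>
          exact ihM _ hM' _ (Acc.intro u huacc)
            (cr2S S hred (Term.step_subst_left hM' 0 u))
      | appCongR _ h' =>
        exact ihu _ h' (redS_rtg (Term.steps_subst_right M u _ 0 h') hred)

/-- Soundness of typing for reducibility. -/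
theorem soundness {Γ : List Ty} {M : Term} {A : Ty} (h : Typing Γ M A) :
    ∀ σ : ℕ → Term, (∀ n B, Γ[n]? = some B → Red B (σ n)) → Red A (Term.msubst σ M) := by
  induction h with
  | var hA => intro σ hσ; exact hσ _ _ hA
  | app hM hN ihM ihN =>
    intro σ hσ
    exact (ihM σ hσ).2 _ (ihN σ hσ)
  | @lam Γ M A B hM ih =>
    intro σ hσ
    simp only [Term.msubst]
    have key : ∀ u, Red A u →
        Term.subst (Term.msubst (Term.up σ) M) 0 u = Term.msubst (fun n => match n with
          | 0 => u | n+1 => σ n) M := fun u _ => Term.subst_msubst_up M σ u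
    have hbody : ∀ u, Red A u → Red (.simple B) (Term.subst (Term.msubst (Term.up σ) M) 0 u) := by
      intro u hu
      rw [key u hu]
      apply ih
      intro n B' hB'
      cases n with
      | zero => simp at hB'; subst hB'; exact hu
      | succ n => exact hσ n B' (by simpa using hB')
    have hsnM : SNbeta (Term.msubst (Term.up σ) M) := by
      apply snbeta_of_image (f := fun t => Term.subst t 0 (Term.var 0))
        (fun a b hab => Term.step_subst_left hab 0 (Term.var 0))
      exact cr1 _ _ (hbody (Term.var 0) (red_var A 0))
    refine ⟨hsnM.lam, fun u hu => ?_⟩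
    exact head_exp B _ hsnM u (cr1 A u hu) (hbody u hu)
  | interI _ _ ih1 ih2 => intro σ hσ; exact ⟨ih1 σ hσ, ih2 σ hσ⟩
  | interE1 _ ih => intro σ hσ; exact (ih σ hσ).1
  | interE2 _ ih => intro σ hσ; exact (ih σ hσ).2

/-- Every term typable in system D is β-strongly-normalizing. -/
theorem snBeta_of_typable (t : Term) (h : Typable t) : SNbeta t := by
  obtain ⟨Γ, A, hT⟩ := h
  have := soundness hT (fun n => Term.var n) (fun n B _ => red_var B n)
  rw [Term.msubst_var] at this
  exact cr1 A t this
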